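/- Let x = (0,0,1), y₁ = (√(1-α²), 0, α), y₂ = (0, √(1-α²), α), y₃ = (0, -√(1-α²), α) in R³ with 0 < α < 1. Then |⟨x, yᵢ⟩| = α for i = 1,2,3, the vectors y₁, y₂, y₃ span R³, and for every 0 < ε < α the unit vector x' = (-ε, 0, √(1-ε²)) satisfies |⟨x', yᵢ⟩| < α for i = 1,2,3. Hence x is isolable but not deficient in {x, y₁, y₂, y₃}. -/

import Mathlib

open scoped RealInnerProductSpace
abbrev E3 := EuclideanSpace ℝ (Fin 3)
noncomputable def v3 (a b c : ℝ) : E3 := (WithLp.equiv 2 (Fin 3 → ℝ)).symm ![a, b, c]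

lemma inner_v3 (a b c d e f : ℝ) : ⟪v3 a b c, v3 d e f⟫ = a*d + b*e + c*f := by
  simp [v3, PiLp.inner_apply, Fin.sum_univ_three, PiLp.toLp_apply]; ring

lemma norm_v3 (a b c : ℝ) : ‖v3 a b c‖ = Real.sqrt (a^2 + b^2 + c^2) := by
  rw [EuclideanSpace.norm_eq]
  congr 1
  simp [v3, Fin.sum_univ_three, PiLp.toLp_apply, sq_abs]

lemma v3_smul (r a b c : ℝ) : r • v3 a b c = v3 (r*a) (r*b) (r*c) := by
  ext i; fin_cases i <;> simp [v3, PiLp.toLp_apply]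

lemma v3_add (a b c d e f : ℝ) : v3 a b c + v3 d e f = v3 (a+d) (b+e) (c+f) := by
  ext i; fin_cases i <;> simp [v3, PiLp.toLp_apply]

lemma v3_sub (a b c d e f : ℝ) : v3 a b c - v3 d e f = v3 (a-d) (b-e) (c-f) := by
  ext i; fin_cases i <;> simp [v3, PiLp.toLp_apply]

set_option maxHeartbeats 1000000 in
theorem isolable_not_deficient_example (α : ℝ) (hα0 : 0 < α) (hα1 : α < 1)
    (x : E3) (y : Fin 3 → E3)
    (hx : x = v3 0 0 1)
    (hy1 : y 0 = v3 (Real.sqrt (1 - α ^ 2)) 0 α)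
    (hy2 : y 1 = v3 0 (Real.sqrt (1 - α ^ 2)) α)
    (hy3 : y 2 = v3 0 (-Real.sqrt (1 - α ^ 2)) α) :
    (∀ i : Fin 3, |⟪x, y i⟫| = α) ∧
    Submodule.span ℝ (Set.range y) = ⊤ ∧
    ∀ ε : ℝ, 0 < ε → ε < α →
      ‖v3 (-ε) 0 (Real.sqrt (1 - ε ^ 2))‖ = 1 ∧
      ∀ i : Fin 3, |⟪v3 (-ε) 0 (Real.sqrt (1 - ε ^ 2)), y i⟫| < α := by
  set s := Real.sqrt (1 - α ^ 2) with hs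
  have hα2 : (0:ℝ) ≤ 1 - α ^ 2 := by nlinarith
  have hs2 : s ^ 2 = 1 - α ^ 2 := Real.sq_sqrt hα2
  have hspos : 0 < s := Real.sqrt_pos.mpr (by nlinarith)
  have hslt : s < 1 := by nlinarith [hs2, hspos]
  refine ⟨?_, ?_, ?_⟩
  · intro i
    fin_cases i
    · show |⟪x, y 0⟫| = α
      rw [hx, hy1, inner_v3, show (0:ℝ)*s + 0*0 + 1*α = α by ring]
      exact abs_of_pos hα0
    · show |⟪x, y 1⟫| = α
      rw [hx, hy2, inner_v3, show (0:ℝ)*0 + 0*s + 1*α = α by ring]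
      exact abs_of_pos hα0
    · show |⟪x, y 2⟫| = α
      rw [hx, hy3, inner_v3, show (0:ℝ)*0 + 0*(-s) + 1*α = α by ring]
      exact abs_of_pos hα0
  · rw [eq_top_iff]
    intro v _
    set S := Submodule.span ℝ (Set.range y) with hS
    have h0 : y 0 ∈ S := Submodule.subset_span ⟨0, rfl⟩
    have h1 : y 1 ∈ S := Submodule.subset_span ⟨1, rfl⟩
    have h2 : y 2 ∈ S := Submodule.subset_span ⟨2, rfl⟩
    have he3 : v3 0 0 1 ∈ S := by
      have : (1/(2*α)) • (y 1 + y 2) = v3 0 0 1 := by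
        rw [hy2, hy3, v3_add, v3_smul, show 1/(2*α)*(0+0) = 0 by ring,
          show 1/(2*α)*(s+-s) = 0 by ring, show 1/(2*α)*(α+α) = 1 by field_simp; ring]
      rw [← this]; exact S.smul_mem _ (S.add_mem h1 h2)
    have he2 : v3 0 1 0 ∈ S := by
      have : (1/(2*s)) • (y 1 - y 2) = v3 0 1 0 := by
        rw [hy2, hy3, v3_sub, v3_smul, show 1/(2*s)*(0-0) = 0 by ring,
          show 1/(2*s)*(s - -s) = 1 by field_simp; ring, show 1/(2*s)*(α-α) = 0 by ring]
      rw [← this]; exact S.smul_mem _ (S.sub_mem h1 h2)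
    have he1 : v3 1 0 0 ∈ S := by
      have : (1/s) • (y 0 - α • v3 0 0 1) = v3 1 0 0 := by
        rw [hy1, v3_smul, v3_sub, v3_smul, show 1/s*(s-α*0) = 1 by field_simp; ring,
          show 1/s*(0-α*0) = 0 by ring, show 1/s*(α-α*1) = 0 by ring]
      rw [← this]; exact S.smul_mem _ (S.sub_mem h0 (S.smul_mem _ he3))
    have hv : v = v 0 • v3 1 0 0 + v 1 • v3 0 1 0 + v 2 • v3 0 0 1 := by
      ext i; fin_cases i <;> simp [v3, PiLp.toLp_apply]
    rw [hv]
    exact S.add_mem (S.add_mem (S.smul_mem _ he1) (S.smul_mem _ he2)) (S.smul_mem _ he3)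
  · intro ε hε0 hεα
    have hε1 : ε < 1 := hεα.trans hα1
    have ht2 : (0:ℝ) ≤ 1 - ε ^ 2 := by nlinarith
    set t := Real.sqrt (1 - ε ^ 2) with htd
    have ht2' : t ^ 2 = 1 - ε ^ 2 := Real.sq_sqrt ht2
    have ht0 : 0 ≤ t := Real.sqrt_nonneg _
    have htlt : t < 1 := by nlinarith
    have hεs : ε * s < α := by nlinarith
    constructor
    · rw [norm_v3, show (-ε)^2 + 0^2 + t^2 = 1 by nlinarith]
      exact Real.sqrt_one
    · intro i
      fin_cases i
      · show |⟪v3 (-ε) 0 t, y 0⟫| < α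
        rw [hy1, inner_v3, abs_lt]
        constructor <;> nlinarith
      · show |⟪v3 (-ε) 0 t, y 1⟫| < α
        rw [hy2, inner_v3, abs_lt]
        constructor <;> nlinarith
      · show |⟪v3 (-ε) 0 t, y 2⟫| < α
        rw [hy3, inner_v3, abs_lt]
        constructor <;> nlinarith
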